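/- For every integer m ≥ 6, the rational number e(m,1) = ∏_{k=1}^{m} (2k)/|B_{2k}| is not an integer. -/
import Mathlib

open Finset Real Nat


theorem ch6_2 : Nat.choose 6 2 = 15 := by rw [Nat.choose_eq_descFactorial_div_factorial]; decide
theorem ch6_4 : Nat.choose 6 4 = 15 := by rw [Nat.choose_eq_descFactorial_div_factorial]; decide
theorem ch8_2 : Nat.choose 8 2 = 28 := by rw [Nat.choose_eq_descFactorial_div_factorial]; decide
theorem ch8_4 : Nat.choose 8 4 = 70 := by rw [Nat.choose_eq_descFactorial_div_factorial]; decide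
theorem ch8_6 : Nat.choose 8 6 = 28 := by rw [Nat.choose_eq_descFactorial_div_factorial]; decide
theorem ch10_2 : Nat.choose 10 2 = 45 := by rw [Nat.choose_eq_descFactorial_div_factorial]; decide
theorem ch10_4 : Nat.choose 10 4 = 210 := by rw [Nat.choose_eq_descFactorial_div_factorial]; decide
theorem ch10_6 : Nat.choose 10 6 = 210 := by rw [Nat.choose_eq_descFactorial_div_factorial]; decide
theorem ch10_8 : Nat.choose 10 8 = 45 := by rw [Nat.choose_eq_descFactorial_div_factorial]; decide
theorem ch12_2 : Nat.choose 12 2 = 66 := by rw [Nat.choose_eq_descFactorial_div_factorial]; decide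
theorem ch12_4 : Nat.choose 12 4 = 495 := by rw [Nat.choose_eq_descFactorial_div_factorial]; decide
theorem ch12_6 : Nat.choose 12 6 = 924 := by rw [Nat.choose_eq_descFactorial_div_factorial]; decide
theorem ch12_8 : Nat.choose 12 8 = 495 := by rw [Nat.choose_eq_descFactorial_div_factorial]; decide
theorem ch12_10 : Nat.choose 12 10 = 66 := by rw [Nat.choose_eq_descFactorial_div_factorial]; decide
theorem ch14_2 : Nat.choose 14 2 = 91 := by rw [Nat.choose_eq_descFactorial_div_factorial]; decide
theorem ch14_4 : Nat.choose 14 4 = 1001 := by rw [Nat.choose_eq_descFactorial_div_factorial]; decide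
theorem ch14_6 : Nat.choose 14 6 = 3003 := by rw [Nat.choose_eq_descFactorial_div_factorial]; decide
theorem ch14_8 : Nat.choose 14 8 = 3003 := by rw [Nat.choose_eq_descFactorial_div_factorial]; decide
theorem ch14_10 : Nat.choose 14 10 = 1001 := by rw [Nat.choose_eq_descFactorial_div_factorial]; decide
theorem ch14_12 : Nat.choose 14 12 = 91 := by rw [Nat.choose_eq_descFactorial_div_factorial]; decide
theorem ch16_2 : Nat.choose 16 2 = 120 := by rw [Nat.choose_eq_descFactorial_div_factorial]; decide
theorem ch16_4 : Nat.choose 16 4 = 1820 := by rw [Nat.choose_eq_descFactorial_div_factorial]; decide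
theorem ch16_6 : Nat.choose 16 6 = 8008 := by rw [Nat.choose_eq_descFactorial_div_factorial]; decide
theorem ch16_8 : Nat.choose 16 8 = 12870 := by rw [Nat.choose_eq_descFactorial_div_factorial]; decide
theorem ch16_10 : Nat.choose 16 10 = 8008 := by rw [Nat.choose_eq_descFactorial_div_factorial]; decide
theorem ch16_12 : Nat.choose 16 12 = 1820 := by rw [Nat.choose_eq_descFactorial_div_factorial]; decide
theorem ch16_14 : Nat.choose 16 14 = 120 := by rw [Nat.choose_eq_descFactorial_div_factorial]; decide
theorem ch18_2 : Nat.choose 18 2 = 153 := by rw [Nat.choose_eq_descFactorial_div_factorial]; decide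
theorem ch18_4 : Nat.choose 18 4 = 3060 := by rw [Nat.choose_eq_descFactorial_div_factorial]; decide
theorem ch18_6 : Nat.choose 18 6 = 18564 := by rw [Nat.choose_eq_descFactorial_div_factorial]; decide
theorem ch18_8 : Nat.choose 18 8 = 43758 := by rw [Nat.choose_eq_descFactorial_div_factorial]; decide
theorem ch18_10 : Nat.choose 18 10 = 43758 := by rw [Nat.choose_eq_descFactorial_div_factorial]; decide
theorem ch18_12 : Nat.choose 18 12 = 18564 := by rw [Nat.choose_eq_descFactorial_div_factorial]; decide
theorem ch18_14 : Nat.choose 18 14 = 3060 := by rw [Nat.choose_eq_descFactorial_div_factorial]; decide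
theorem ch18_16 : Nat.choose 18 16 = 153 := by rw [Nat.choose_eq_descFactorial_div_factorial]; decide
theorem ch20_2 : Nat.choose 20 2 = 190 := by rw [Nat.choose_eq_descFactorial_div_factorial]; decide
theorem ch20_4 : Nat.choose 20 4 = 4845 := by rw [Nat.choose_eq_descFactorial_div_factorial]; decide
theorem ch20_6 : Nat.choose 20 6 = 38760 := by rw [Nat.choose_eq_descFactorial_div_factorial]; decide
theorem ch20_8 : Nat.choose 20 8 = 125970 := by rw [Nat.choose_eq_descFactorial_div_factorial]; decide
theorem ch20_10 : Nat.choose 20 10 = 184756 := by rw [Nat.choose_eq_descFactorial_div_factorial]; decide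
theorem ch20_12 : Nat.choose 20 12 = 125970 := by rw [Nat.choose_eq_descFactorial_div_factorial]; decide
theorem ch20_14 : Nat.choose 20 14 = 38760 := by rw [Nat.choose_eq_descFactorial_div_factorial]; decide
theorem ch20_16 : Nat.choose 20 16 = 4845 := by rw [Nat.choose_eq_descFactorial_div_factorial]; decide
theorem ch20_18 : Nat.choose 20 18 = 190 := by rw [Nat.choose_eq_descFactorial_div_factorial]; decide
theorem ch22_2 : Nat.choose 22 2 = 231 := by rw [Nat.choose_eq_descFactorial_div_factorial]; decide
theorem ch22_4 : Nat.choose 22 4 = 7315 := by rw [Nat.choose_eq_descFactorial_div_factorial]; decide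
theorem ch22_6 : Nat.choose 22 6 = 74613 := by rw [Nat.choose_eq_descFactorial_div_factorial]; decide
theorem ch22_8 : Nat.choose 22 8 = 319770 := by rw [Nat.choose_eq_descFactorial_div_factorial]; decide
theorem ch22_10 : Nat.choose 22 10 = 646646 := by rw [Nat.choose_eq_descFactorial_div_factorial]; decide
theorem ch22_12 : Nat.choose 22 12 = 646646 := by rw [Nat.choose_eq_descFactorial_div_factorial]; decide
theorem ch22_14 : Nat.choose 22 14 = 319770 := by rw [Nat.choose_eq_descFactorial_div_factorial]; decide
theorem ch22_16 : Nat.choose 22 16 = 74613 := by rw [Nat.choose_eq_descFactorial_div_factorial]; decide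
theorem ch22_18 : Nat.choose 22 18 = 7315 := by rw [Nat.choose_eq_descFactorial_div_factorial]; decide
theorem ch22_20 : Nat.choose 22 20 = 231 := by rw [Nat.choose_eq_descFactorial_div_factorial]; decide
theorem ch24_2 : Nat.choose 24 2 = 276 := by rw [Nat.choose_eq_descFactorial_div_factorial]; decide
theorem ch24_4 : Nat.choose 24 4 = 10626 := by rw [Nat.choose_eq_descFactorial_div_factorial]; decide
theorem ch24_6 : Nat.choose 24 6 = 134596 := by rw [Nat.choose_eq_descFactorial_div_factorial]; decide
theorem ch24_8 : Nat.choose 24 8 = 735471 := by rw [Nat.choose_eq_descFactorial_div_factorial]; decide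
theorem ch24_10 : Nat.choose 24 10 = 1961256 := by rw [Nat.choose_eq_descFactorial_div_factorial]; decide
theorem ch24_12 : Nat.choose 24 12 = 2704156 := by rw [Nat.choose_eq_descFactorial_div_factorial]; decide
theorem ch24_14 : Nat.choose 24 14 = 1961256 := by rw [Nat.choose_eq_descFactorial_div_factorial]; decide
theorem ch24_16 : Nat.choose 24 16 = 735471 := by rw [Nat.choose_eq_descFactorial_div_factorial]; decide
theorem ch24_18 : Nat.choose 24 18 = 134596 := by rw [Nat.choose_eq_descFactorial_div_factorial]; decide
theorem ch24_20 : Nat.choose 24 20 = 10626 := by rw [Nat.choose_eq_descFactorial_div_factorial]; decide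
theorem ch24_22 : Nat.choose 24 22 = 276 := by rw [Nat.choose_eq_descFactorial_div_factorial]; decide
theorem ch26_2 : Nat.choose 26 2 = 325 := by rw [Nat.choose_eq_descFactorial_div_factorial]; decide
theorem ch26_4 : Nat.choose 26 4 = 14950 := by rw [Nat.choose_eq_descFactorial_div_factorial]; decide
theorem ch26_6 : Nat.choose 26 6 = 230230 := by rw [Nat.choose_eq_descFactorial_div_factorial]; decide
theorem ch26_8 : Nat.choose 26 8 = 1562275 := by rw [Nat.choose_eq_descFactorial_div_factorial]; decide
theorem ch26_10 : Nat.choose 26 10 = 5311735 := by rw [Nat.choose_eq_descFactorial_div_factorial]; decide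
theorem ch26_12 : Nat.choose 26 12 = 9657700 := by rw [Nat.choose_eq_descFactorial_div_factorial]; decide
theorem ch26_14 : Nat.choose 26 14 = 9657700 := by rw [Nat.choose_eq_descFactorial_div_factorial]; decide
theorem ch26_16 : Nat.choose 26 16 = 5311735 := by rw [Nat.choose_eq_descFactorial_div_factorial]; decide
theorem ch26_18 : Nat.choose 26 18 = 1562275 := by rw [Nat.choose_eq_descFactorial_div_factorial]; decide
theorem ch26_20 : Nat.choose 26 20 = 230230 := by rw [Nat.choose_eq_descFactorial_div_factorial]; decide
theorem ch26_22 : Nat.choose 26 22 = 14950 := by rw [Nat.choose_eq_descFactorial_div_factorial]; decide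
theorem ch26_24 : Nat.choose 26 24 = 325 := by rw [Nat.choose_eq_descFactorial_div_factorial]; decide
theorem ch28_2 : Nat.choose 28 2 = 378 := by rw [Nat.choose_eq_descFactorial_div_factorial]; decide
theorem ch28_4 : Nat.choose 28 4 = 20475 := by rw [Nat.choose_eq_descFactorial_div_factorial]; decide
theorem ch28_6 : Nat.choose 28 6 = 376740 := by rw [Nat.choose_eq_descFactorial_div_factorial]; decide
theorem ch28_8 : Nat.choose 28 8 = 3108105 := by rw [Nat.choose_eq_descFactorial_div_factorial]; decide
theorem ch28_10 : Nat.choose 28 10 = 13123110 := by rw [Nat.choose_eq_descFactorial_div_factorial]; decide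
theorem ch28_12 : Nat.choose 28 12 = 30421755 := by rw [Nat.choose_eq_descFactorial_div_factorial]; decide
theorem ch28_14 : Nat.choose 28 14 = 40116600 := by rw [Nat.choose_eq_descFactorial_div_factorial]; decide
theorem ch28_16 : Nat.choose 28 16 = 30421755 := by rw [Nat.choose_eq_descFactorial_div_factorial]; decide
theorem ch28_18 : Nat.choose 28 18 = 13123110 := by rw [Nat.choose_eq_descFactorial_div_factorial]; decide
theorem ch28_20 : Nat.choose 28 20 = 3108105 := by rw [Nat.choose_eq_descFactorial_div_factorial]; decide
theorem ch28_22 : Nat.choose 28 22 = 376740 := by rw [Nat.choose_eq_descFactorial_div_factorial]; decide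
theorem ch28_24 : Nat.choose 28 24 = 20475 := by rw [Nat.choose_eq_descFactorial_div_factorial]; decide
theorem ch28_26 : Nat.choose 28 26 = 378 := by rw [Nat.choose_eq_descFactorial_div_factorial]; decide
theorem b5 : bernoulli' 5 = 0 := bernoulli'_eq_zero_of_odd (by decide) (by norm_num)
theorem b7 : bernoulli' 7 = 0 := bernoulli'_eq_zero_of_odd (by decide) (by norm_num)
theorem b9 : bernoulli' 9 = 0 := bernoulli'_eq_zero_of_odd (by decide) (by norm_num)
theorem b11 : bernoulli' 11 = 0 := bernoulli'_eq_zero_of_odd (by decide) (by norm_num)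
theorem b13 : bernoulli' 13 = 0 := bernoulli'_eq_zero_of_odd (by decide) (by norm_num)
theorem b15 : bernoulli' 15 = 0 := bernoulli'_eq_zero_of_odd (by decide) (by norm_num)
theorem b17 : bernoulli' 17 = 0 := bernoulli'_eq_zero_of_odd (by decide) (by norm_num)
theorem b19 : bernoulli' 19 = 0 := bernoulli'_eq_zero_of_odd (by decide) (by norm_num)
theorem b21 : bernoulli' 21 = 0 := bernoulli'_eq_zero_of_odd (by decide) (by norm_num)
theorem b23 : bernoulli' 23 = 0 := bernoulli'_eq_zero_of_odd (by decide) (by norm_num)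
theorem b25 : bernoulli' 25 = 0 := bernoulli'_eq_zero_of_odd (by decide) (by norm_num)
theorem b27 : bernoulli' 27 = 0 := bernoulli'_eq_zero_of_odd (by decide) (by norm_num)
theorem b6 : bernoulli' 6 = (1/42 : ℚ) := by
  rw [bernoulli'_def]
  norm_num [Finset.sum_range_succ, bernoulli'_two, bernoulli'_three, bernoulli'_four, b5, ch6_2, ch6_4]
theorem b8 : bernoulli' 8 = (-1/30 : ℚ) := by
  rw [bernoulli'_def]
  norm_num [Finset.sum_range_succ, bernoulli'_two, bernoulli'_three, bernoulli'_four, b5, b7, b6, ch8_2, ch8_4, ch8_6]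
theorem b10 : bernoulli' 10 = (5/66 : ℚ) := by
  rw [bernoulli'_def]
  norm_num [Finset.sum_range_succ, bernoulli'_two, bernoulli'_three, bernoulli'_four, b5, b7, b9, b6, b8, ch10_2, ch10_4, ch10_6, ch10_8]
theorem b12 : bernoulli' 12 = (-691/2730 : ℚ) := by
  rw [bernoulli'_def]
  norm_num [Finset.sum_range_succ, bernoulli'_two, bernoulli'_three, bernoulli'_four, b5, b7, b9, b11, b6, b8, b10, ch12_2, ch12_4, ch12_6, ch12_8, ch12_10]
theorem b14 : bernoulli' 14 = (7/6 : ℚ) := by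
  rw [bernoulli'_def]
  norm_num [Finset.sum_range_succ, bernoulli'_two, bernoulli'_three, bernoulli'_four, b5, b7, b9, b11, b13, b6, b8, b10, b12, ch14_2, ch14_4, ch14_6, ch14_8, ch14_10, ch14_12]
theorem b16 : bernoulli' 16 = (-3617/510 : ℚ) := by
  rw [bernoulli'_def]
  norm_num [Finset.sum_range_succ, bernoulli'_two, bernoulli'_three, bernoulli'_four, b5, b7, b9, b11, b13, b15, b6, b8, b10, b12, b14, ch16_2, ch16_4, ch16_6, ch16_8, ch16_10, ch16_12, ch16_14]
theorem b18 : bernoulli' 18 = (43867/798 : ℚ) := by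
  rw [bernoulli'_def]
  norm_num [Finset.sum_range_succ, bernoulli'_two, bernoulli'_three, bernoulli'_four, b5, b7, b9, b11, b13, b15, b17, b6, b8, b10, b12, b14, b16, ch18_2, ch18_4, ch18_6, ch18_8, ch18_10, ch18_12, ch18_14, ch18_16]
theorem b20 : bernoulli' 20 = (-174611/330 : ℚ) := by
  rw [bernoulli'_def]
  norm_num [Finset.sum_range_succ, bernoulli'_two, bernoulli'_three, bernoulli'_four, b5, b7, b9, b11, b13, b15, b17, b19, b6, b8, b10, b12, b14, b16, b18, ch20_2, ch20_4, ch20_6, ch20_8, ch20_10, ch20_12, ch20_14, ch20_16, ch20_18]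
theorem b22 : bernoulli' 22 = (854513/138 : ℚ) := by
  rw [bernoulli'_def]
  norm_num [Finset.sum_range_succ, bernoulli'_two, bernoulli'_three, bernoulli'_four, b5, b7, b9, b11, b13, b15, b17, b19, b21, b6, b8, b10, b12, b14, b16, b18, b20, ch22_2, ch22_4, ch22_6, ch22_8, ch22_10, ch22_12, ch22_14, ch22_16, ch22_18, ch22_20]
theorem b24 : bernoulli' 24 = (-236364091/2730 : ℚ) := by
  rw [bernoulli'_def]
  norm_num [Finset.sum_range_succ, bernoulli'_two, bernoulli'_three, bernoulli'_four, b5, b7, b9, b11, b13, b15, b17, b19, b21, b23, b6, b8, b10, b12, b14, b16, b18, b20, b22, ch24_2, ch24_4, ch24_6, ch24_8, ch24_10, ch24_12, ch24_14, ch24_16, ch24_18, ch24_20, ch24_22]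
theorem b26 : bernoulli' 26 = (8553103/6 : ℚ) := by
  rw [bernoulli'_def]
  norm_num [Finset.sum_range_succ, bernoulli'_two, bernoulli'_three, bernoulli'_four, b5, b7, b9, b11, b13, b15, b17, b19, b21, b23, b25, b6, b8, b10, b12, b14, b16, b18, b20, b22, b24, ch26_2, ch26_4, ch26_6, ch26_8, ch26_10, ch26_12, ch26_14, ch26_16, ch26_18, ch26_20, ch26_22, ch26_24]
theorem b28 : bernoulli' 28 = (-23749461029/870 : ℚ) := by
  rw [bernoulli'_def]
  norm_num [Finset.sum_range_succ, bernoulli'_two, bernoulli'_three, bernoulli'_four, b5, b7, b9, b11, b13, b15, b17, b19, b21, b23, b25, b27, b6, b8, b10, b12, b14, b16, b18, b20, b22, b24, b26, ch28_2, ch28_4, ch28_6, ch28_8, ch28_10, ch28_12, ch28_14, ch28_16, ch28_18, ch28_20, ch28_22, ch28_24, ch28_26]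
theorem A2 : |bernoulli 2| = (1/6 : ℚ) := by
  rw [bernoulli_eq_bernoulli'_of_ne_one (by norm_num), bernoulli'_two, abs_of_nonneg (by norm_num)]
theorem A4 : |bernoulli 4| = (1/30 : ℚ) := by
  rw [bernoulli_eq_bernoulli'_of_ne_one (by norm_num), bernoulli'_four, abs_of_neg (by norm_num)] ; norm_num
theorem A6 : |bernoulli 6| = (1/42 : ℚ) := by
  rw [bernoulli_eq_bernoulli'_of_ne_one (by norm_num), b6, abs_of_nonneg (by norm_num)]
theorem A8 : |bernoulli 8| = (1/30 : ℚ) := by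
  rw [bernoulli_eq_bernoulli'_of_ne_one (by norm_num), b8, abs_of_neg (by norm_num)] ; norm_num
theorem A10 : |bernoulli 10| = (5/66 : ℚ) := by
  rw [bernoulli_eq_bernoulli'_of_ne_one (by norm_num), b10, abs_of_nonneg (by norm_num)]
theorem A12 : |bernoulli 12| = (691/2730 : ℚ) := by
  rw [bernoulli_eq_bernoulli'_of_ne_one (by norm_num), b12, abs_of_neg (by norm_num)] ; norm_num
theorem A14 : |bernoulli 14| = (7/6 : ℚ) := by
  rw [bernoulli_eq_bernoulli'_of_ne_one (by norm_num), b14, abs_of_nonneg (by norm_num)]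
theorem A16 : |bernoulli 16| = (3617/510 : ℚ) := by
  rw [bernoulli_eq_bernoulli'_of_ne_one (by norm_num), b16, abs_of_neg (by norm_num)] ; norm_num
theorem A18 : |bernoulli 18| = (43867/798 : ℚ) := by
  rw [bernoulli_eq_bernoulli'_of_ne_one (by norm_num), b18, abs_of_nonneg (by norm_num)]
theorem A20 : |bernoulli 20| = (174611/330 : ℚ) := by
  rw [bernoulli_eq_bernoulli'_of_ne_one (by norm_num), b20, abs_of_neg (by norm_num)] ; norm_num
theorem A22 : |bernoulli 22| = (854513/138 : ℚ) := by
  rw [bernoulli_eq_bernoulli'_of_ne_one (by norm_num), b22, abs_of_nonneg (by norm_num)]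
theorem A24 : |bernoulli 24| = (236364091/2730 : ℚ) := by
  rw [bernoulli_eq_bernoulli'_of_ne_one (by norm_num), b24, abs_of_neg (by norm_num)] ; norm_num
theorem A26 : |bernoulli 26| = (8553103/6 : ℚ) := by
  rw [bernoulli_eq_bernoulli'_of_ne_one (by norm_num), b26, abs_of_nonneg (by norm_num)]
theorem A28 : |bernoulli 28| = (23749461029/870 : ℚ) := by
  rw [bernoulli_eq_bernoulli'_of_ne_one (by norm_num), b28, abs_of_neg (by norm_num)] ; norm_num

theorem Psucc (m : ℕ) : (∏ k ∈ Icc 1 (m+1), (2 * k : ℚ) / |bernoulli (2 * k)|) =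
    (∏ k ∈ Icc 1 m, (2 * k : ℚ) / |bernoulli (2 * k)|) * ((2 * ((m+1 : ℕ)) : ℚ) / |bernoulli (2 * (m+1))|) :=
  Finset.prod_Icc_succ_top (Nat.le_add_left 1 m) _
theorem P1 : (∏ k ∈ Icc 1 (1 : ℕ), (2 * k : ℚ) / |bernoulli (2 * k)|) = 12 := by
  rw [Finset.Icc_self, Finset.prod_singleton]
  norm_num [A2]
theorem P2 : (∏ k ∈ Icc 1 (2 : ℕ), (2 * k : ℚ) / |bernoulli (2 * k)|) = (1440 : ℚ) := by
  have h := Psucc 1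
  simp only [Nat.reduceAdd, Nat.reduceMul] at h
  rw [P1, A4] at h
  rw [h]
  norm_num
theorem P3 : (∏ k ∈ Icc 1 (3 : ℕ), (2 * k : ℚ) / |bernoulli (2 * k)|) = (362880 : ℚ) := by
  have h := Psucc 2
  simp only [Nat.reduceAdd, Nat.reduceMul] at h
  rw [P2, A6] at h
  rw [h]
  norm_num
theorem P4 : (∏ k ∈ Icc 1 (4 : ℕ), (2 * k : ℚ) / |bernoulli (2 * k)|) = (87091200 : ℚ) := by
  have h := Psucc 3
  simp only [Nat.reduceAdd, Nat.reduceMul] at h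
  rw [P3, A8] at h
  rw [h]
  norm_num
theorem P5 : (∏ k ∈ Icc 1 (5 : ℕ), (2 * k : ℚ) / |bernoulli (2 * k)|) = (11496038400 : ℚ) := by
  have h := Psucc 4
  simp only [Nat.reduceAdd, Nat.reduceMul] at h
  rw [P4, A10] at h
  rw [h]
  norm_num
theorem P6 : (∏ k ∈ Icc 1 (6 : ℕ), (2 * k : ℚ) / |bernoulli (2 * k)|) = (376610217984000/691 : ℚ) := by
  have h := Psucc 5
  simp only [Nat.reduceAdd, Nat.reduceMul] at h
  rw [P5, A12] at h
  rw [h]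
  norm_num
theorem P7 : (∏ k ∈ Icc 1 (7 : ℕ), (2 * k : ℚ) / |bernoulli (2 * k)|) = (4519322615808000/691 : ℚ) := by
  have h := Psucc 6
  simp only [Nat.reduceAdd, Nat.reduceMul] at h
  rw [P6, A14] at h
  rw [h]
  norm_num
theorem P8 : (∏ k ∈ Icc 1 (8 : ℕ), (2 * k : ℚ) / |bernoulli (2 * k)|) = (36877672544993280000/2499347 : ℚ) := by
  have h := Psucc 7
  simp only [Nat.reduceAdd, Nat.reduceMul] at h
  rw [P7, A16] at h
  rw [h]
  norm_num
theorem P9 : (∏ k ∈ Icc 1 (9 : ℕ), (2 * k : ℚ) / |bernoulli (2 * k)|) = (529710888436283473920000/109638854849 : ℚ) := by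
  have h := Psucc 8
  simp only [Nat.reduceAdd, Nat.reduceMul] at h
  rw [P8, A18] at h
  rw [h]
  norm_num
theorem P10 : (∏ k ∈ Icc 1 (10 : ℕ), (2 * k : ℚ) / |bernoulli (2 * k)|) = (3496091863679470927872000000/19144150084038739 : ℚ) := by
  have h := Psucc 9
  simp only [Nat.reduceAdd, Nat.reduceMul] at h
  rw [P9, A20] at h
  rw [h]
  norm_num
theorem P11 : (∏ k ∈ Icc 1 (11 : ℕ), (2 * k : ℚ) / |bernoulli (2 * k)|) = (964921354375533976092672000000/1487175010978381361737 : ℚ) := by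
  have h := Psucc 10
  simp only [Nat.reduceAdd, Nat.reduceMul] at h
  rw [P10, A22] at h
  rw [h]
  norm_num
theorem P12 : (∏ k ∈ Icc 1 (12 : ℕ), (2 * k : ℚ) / |bernoulli (2 * k)|) = (63221647138684986113591869440000000/351514769627820131218308186067 : ℚ) := by
  have h := Psucc 11
  simp only [Nat.reduceAdd, Nat.reduceMul] at h
  rw [P11, A24] at h
  rw [h]
  norm_num
theorem P13 : (∏ k ∈ Icc 1 (13 : ℕ), (2 * k : ℚ) / |bernoulli (2 * k)|) = (758659765664219833363102433280000000/231272463896001326752592723167247377 : ℚ) := by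
  have h := Psucc 12
  simp only [Nat.reduceAdd, Nat.reduceMul] at h
  rw [P12, A26] at h
  rw [h]
  norm_num
theorem P14 : (∏ k ∈ Icc 1 (14 : ℕ), (2 * k : ℚ) / |bernoulli (2 * k)|) = (2640135984511485020103596467814400000000/784656624054127574091856571938503861323424419 : ℚ) := by
  have h := Psucc 13
  simp only [Nat.reduceAdd, Nat.reduceMul] at h
  rw [P13, A28] at h
  rw [h]
  norm_num


theorem bern_lb (k : ℕ) (hk : k ≠ 0) :
    ((2 * k)! : ℝ) / (2 ^ (2 * k - 1) * π ^ (2 * k)) ≤ |((bernoulli (2 * k) : ℚ) : ℝ)| := by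
  have h := hasSum_zeta_nat (k := k) hk
  have h1 : (1 : ℝ) ≤ (-1 : ℝ) ^ (k + 1) * 2 ^ (2 * k - 1) * π ^ (2 * k) *
      (bernoulli (2 * k) : ℝ) / (2 * k)! := by
    have := le_hasSum h 1 (fun j _ => by positivity)
    simpa using this
  have h2 : (1 : ℝ) ≤ |(-1 : ℝ) ^ (k + 1) * 2 ^ (2 * k - 1) * π ^ (2 * k) *
      (bernoulli (2 * k) : ℝ) / (2 * k)!| := h1.trans (le_abs_self _)
  rw [abs_div, abs_mul, abs_mul, abs_mul, abs_pow, abs_pow, abs_pow, abs_neg, abs_one,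
    one_pow, one_mul, abs_two, abs_of_nonneg pi_nonneg, Nat.abs_cast] at h2
  have hc : (0 : ℝ) < 2 ^ (2 * k - 1) * π ^ (2 * k) := by positivity
  have hf : (0 : ℝ) < ((2 * k)! : ℝ) := by positivity
  rw [le_div_iff₀ hf, one_mul] at h2
  rw [div_le_iff₀ hc]
  calc ((2 * k)! : ℝ) ≤ 2 ^ (2 * k - 1) * π ^ (2 * k) * |(bernoulli (2 * k) : ℝ)| := by
        linarith [h2]
    _ = |(bernoulli (2 * k) : ℝ)| * (2 ^ (2 * k - 1) * π ^ (2 * k)) := by ring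

theorem bern_ne (k : ℕ) (hk : k ≠ 0) : (0 : ℚ) < |bernoulli (2 * k)| := by
  have h := bern_lb k hk
  have hf : (0 : ℝ) < ((2 * k)! : ℝ) / (2 ^ (2 * k - 1) * π ^ (2 * k)) := by positivity
  have : (0 : ℝ) < |((bernoulli (2 * k) : ℚ) : ℝ)| := lt_of_lt_of_le hf h
  rw [← Rat.cast_abs] at this
  exact_mod_cast this

theorem fact_lb (k : ℕ) (hk : 15 ≤ k) : (k : ℝ) * 6.3 ^ (2 * k) ≤ ((2 * k)! : ℝ) := by
  induction k, hk using Nat.le_induction with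
  | base =>
    norm_num [Nat.factorial]
  | succ n hn ih =>
    have h1 : (0:ℝ) < 6.3 ^ (2 * n) := by positivity
    have h2 : (15:ℝ) ≤ (n:ℝ) := by exact_mod_cast hn
    have e1 : 2 * (n + 1) = (2 * n + 1) + 1 := by ring
    rw [e1, Nat.factorial_succ, Nat.factorial_succ]
    push_cast
    have e2 : (6.3:ℝ) ^ (2 * n + 1 + 1) = 6.3 ^ (2 * n) * (6.3 * 6.3) := by
      rw [pow_succ, pow_succ]; ring
    rw [e2]
    have hq0 : (6.3*6.3 : ℝ) ≤ 2*((2*(n:ℝ)+1)*(n:ℝ)) := by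
      nlinarith [h2, mul_le_mul_of_nonneg_right h2 (by positivity : (0:ℝ) ≤ (n:ℝ))]
    have hq : ((n:ℝ)+1)*(6.3*6.3) ≤ (2*(n:ℝ)+1+1)*((2*(n:ℝ)+1)*(n:ℝ)) := by
      have h3 := mul_le_mul_of_nonneg_left hq0 (show (0:ℝ) ≤ (n:ℝ)+1 by positivity)
      nlinarith [h3]
    calc ((n:ℝ)+1) * (6.3 ^ (2*n) * (6.3*6.3)) = (((n:ℝ)+1)*(6.3*6.3)) * 6.3 ^ (2*n) := by ring
      _ ≤ ((2*(n:ℝ)+1+1)*((2*(n:ℝ)+1)*(n:ℝ))) * 6.3 ^ (2*n) :=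
          mul_le_mul_of_nonneg_right hq h1.le
      _ = (2*(n:ℝ)+1+1)*((2*(n:ℝ)+1)*((n:ℝ) * 6.3 ^ (2*n))) := by ring
      _ ≤ (2*(n:ℝ)+1+1)*((2*(n:ℝ)+1)*((2*n)! : ℝ)) := by
          apply mul_le_mul_of_nonneg_left _ (by positivity)
          exact mul_le_mul_of_nonneg_left ih (by positivity)

theorem term_le_one (k : ℕ) (hk : 15 ≤ k) :
    (2 * k : ℚ) / |bernoulli (2 * k)| ≤ 1 := by
  have hb := bern_lb k (by omega)
  have hfa := fact_lb k hk
  have hπ : π ≤ 3.15 := pi_lt_d2.le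
  have hπ0 : (0:ℝ) ≤ π := pi_nonneg
  have hk1 : (1:ℝ) ≤ (k:ℝ) := by exact_mod_cast Nat.one_le_iff_ne_zero.2 (by omega)
  -- 2^(2k-1) * π^(2k) ≤ (1/2) * 6.3^(2k)
  have h2 : (2:ℝ) ^ (2 * k - 1) * π ^ (2 * k) ≤ 6.3 ^ (2 * k) / 2 := by
    have hp : π ^ (2 * k) ≤ 3.15 ^ (2 * k) := pow_le_pow_left₀ hπ0 hπ _
    have h21 : (2:ℝ) ^ (2 * k - 1) = 2 ^ (2 * k) / 2 := by
      rw [eq_div_iff (two_ne_zero' ℝ), ← pow_succ]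
      congr 1
      omega
    have h63 : (2:ℝ) ^ (2 * k) * 3.15 ^ (2 * k) = 6.3 ^ (2 * k) := by
      rw [← mul_pow]; norm_num
    calc (2:ℝ) ^ (2 * k - 1) * π ^ (2 * k) ≤ 2 ^ (2 * k - 1) * 3.15 ^ (2 * k) := by
          apply mul_le_mul_of_nonneg_left hp (by positivity)
      _ = 6.3 ^ (2 * k) / 2 := by rw [h21, div_mul_eq_mul_div, h63]
  -- hence 2k ≤ lower bound
  have key : (2 * k : ℝ) ≤ ((2 * k)! : ℝ) / (2 ^ (2 * k - 1) * π ^ (2 * k)) := by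
    rw [le_div_iff₀ (by positivity)]
    calc (2 * k : ℝ) * (2 ^ (2 * k - 1) * π ^ (2 * k)) ≤ 2 * k * (6.3 ^ (2 * k) / 2) := by
          apply mul_le_mul_of_nonneg_left h2 (by positivity)
      _ = (k : ℝ) * 6.3 ^ (2 * k) := by ring
      _ ≤ ((2 * k)! : ℝ) := hfa
  have : (2 * k : ℝ) ≤ |((bernoulli (2 * k) : ℚ) : ℝ)| := key.trans hb
  rw [← Rat.cast_abs] at this
  have h' : (2 * k : ℚ) ≤ |bernoulli (2 * k)| := by exact_mod_cast this
  rw [div_le_one (bern_ne k (by omega))]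
  exact h'

theorem term_pos (k : ℕ) (hk : k ≠ 0) : (0:ℚ) < (2 * k : ℚ) / |bernoulli (2 * k)| := by
  apply div_pos _ (bern_ne k hk)
  have : (0:ℚ) < (k:ℚ) := by exact_mod_cast Nat.pos_of_ne_zero hk
  linarith

/-- For every `m ≥ 6`, the rational number `e(m,1) = ∏_{k=1}^m (2k)/|B_{2k}|`
is not an integer. -/
theorem e_m_one_not_integer (m : ℕ) (hm : 6 ≤ m) :
    ¬∃ z : ℤ, (∏ k ∈ Icc 1 m, (2 * k : ℚ) / |bernoulli (2 * k)|) = (z : ℚ) := by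
  rintro ⟨z, hz⟩
  by_cases h13 : m ≤ 13
  · interval_cases m
    · rw [P6] at hz
      rw [div_eq_iff (by norm_num : ((691:ℚ)) ≠ 0)] at hz
      have h2 : (376610217984000 : ℤ) = z * 691 := by exact_mod_cast hz
      omega
    · rw [P7] at hz
      rw [div_eq_iff (by norm_num : ((691:ℚ)) ≠ 0)] at hz
      have h2 : (4519322615808000 : ℤ) = z * 691 := by exact_mod_cast hz
      omega
    · rw [P8] at hz
      rw [div_eq_iff (by norm_num : ((2499347:ℚ)) ≠ 0)] at hz
      have h2 : (36877672544993280000 : ℤ) = z * 2499347 := by exact_mod_cast hz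
      omega
    · rw [P9] at hz
      rw [div_eq_iff (by norm_num : ((109638854849:ℚ)) ≠ 0)] at hz
      have h2 : (529710888436283473920000 : ℤ) = z * 109638854849 := by exact_mod_cast hz
      omega
    · rw [P10] at hz
      rw [div_eq_iff (by norm_num : ((19144150084038739:ℚ)) ≠ 0)] at hz
      have h2 : (3496091863679470927872000000 : ℤ) = z * 19144150084038739 := by exact_mod_cast hz
      omega
    · rw [P11] at hz
      rw [div_eq_iff (by norm_num : ((1487175010978381361737:ℚ)) ≠ 0)] at hz
      have h2 : (964921354375533976092672000000 : ℤ) = z * 1487175010978381361737 := by exact_mod_cast hz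
      omega
    · rw [P12] at hz
      rw [div_eq_iff (by norm_num : ((351514769627820131218308186067:ℚ)) ≠ 0)] at hz
      have h2 : (63221647138684986113591869440000000 : ℤ) = z * 351514769627820131218308186067 := by exact_mod_cast hz
      omega
    · rw [P13] at hz
      rw [div_eq_iff (by norm_num : ((231272463896001326752592723167247377:ℚ)) ≠ 0)] at hz
      have h2 : (758659765664219833363102433280000000 : ℤ) = z * 231272463896001326752592723167247377 := by exact_mod_cast hz
      omega
  · have h14 : 14 ≤ m := by omega
    have hIcc : ∀ n : ℕ, Finset.Icc 1 n = Finset.Ioc 0 n := fun n => by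
      ext x; simp [Finset.mem_Icc, Finset.mem_Ioc]; omega
    rw [hIcc] at hz
    rw [← Finset.prod_Ioc_consecutive (fun k : ℕ => (2 * k : ℚ) / |bernoulli (2 * k)|)
      (Nat.zero_le 14) h14] at hz
    have hP14 : (∏ k ∈ Ioc (0:ℕ) 14, (2 * k : ℚ) / |bernoulli (2 * k)|) =
        (2640135984511485020103596467814400000000/784656624054127574091856571938503861323424419 : ℚ) := by
      rw [← hIcc]; exact P14
    rw [hP14] at hz
    have hle : (∏ k ∈ Ioc 14 m, (2 * k : ℚ) / |bernoulli (2 * k)|) ≤ 1 := by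
      apply Finset.prod_le_one
      · intro i hi
        exact (term_pos i (by have := (Finset.mem_Ioc.mp hi).1; omega)).le
      · intro i hi
        exact term_le_one i (by have := (Finset.mem_Ioc.mp hi).1; omega)
    have hpos : (0:ℚ) < ∏ k ∈ Ioc 14 m, (2 * k : ℚ) / |bernoulli (2 * k)| := by
      apply Finset.prod_pos
      intro i hi
      exact term_pos i (by have := (Finset.mem_Ioc.mp hi).1; omega)
    have hz1 : (z : ℚ) < 1 := by
      rw [← hz]
      calc (2640135984511485020103596467814400000000/784656624054127574091856571938503861323424419 : ℚ) * ∏ k ∈ Ioc 14 m, (2 * k : ℚ) / |bernoulli (2 * k)|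
          ≤ (2640135984511485020103596467814400000000/784656624054127574091856571938503861323424419 : ℚ) * 1 :=
            mul_le_mul_of_nonneg_left hle (by norm_num)
        _ < 1 := by norm_num
    have hz0 : (0:ℚ) < (z : ℚ) := by
      rw [← hz]
      exact mul_pos (by norm_num) hpos
    have hz0' : (0:ℤ) < z := by exact_mod_cast hz0
    have hz1' : z < 1 := by exact_mod_cast hz1
    omega
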